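/- arXiv:2108.09590 — 2 statements merged into one kernel-verified Lean document; each statement's English description precedes it below -/
import Mathlib

section
/- Fix an integer d ≥ 1 and an integer k ≥ 2. For sequences α(N) > 0 and μ_1(N), ..., μ_k(N) > 0 indexed by N ∈ ℕ, one has μ_k·α^d·β_k^{d+1} → 0 as N → ∞ if and only if μ_k·α^d·β_{k-1}^{d+1} → 0 as N → ∞, where β_j := (N·α^{(j-1)d}·∏_{i=1}^{j} μ_i)^{-1/((j-1)d+j)}. (Lemma 3.2 of the paper.) -/
open Filter


/-- `beta d α μ j N` is the quantity
`β_j = (N · α^{(j-1)d} · ∏_{i=1}^{j} μ_i)^{-1/((j-1)d+j)}` from the paper,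
where all quantities depend on `N` and the power is a real power. -/
noncomputable def beta (d : ℕ) (α : ℕ → ℝ) (μ : ℕ → ℕ → ℝ) (j N : ℕ) : ℝ :=
  ((N : ℝ) * α N ^ ((j - 1) * d) * ∏ i ∈ Finset.Icc 1 j, μ i N) ^
    (-(1 / (((j - 1) * d + j : ℕ) : ℝ)))

private lemma rpow_tendsto_aux {θ : ℝ} (hθ : 0 < θ) {f g : ℕ → ℝ}
    (hfg : ∀ᶠ N in atTop, f N = g N ^ θ)
    (hg : Tendsto g atTop (nhds 0)) : Tendsto f atTop (nhds 0) := by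
  have h0 : Tendsto (fun N => g N ^ θ) atTop (nhds 0) := by
    have := ((Real.continuousAt_rpow_const 0 θ (Or.inr hθ.le)).tendsto).comp hg
    simpa [Function.comp_def, Real.zero_rpow hθ.ne'] using this
  exact h0.congr' (by filter_upwards [hfg] with N h using h.symm)

private lemma key_eq (a P : ℝ) (ha : 0 < a) (hP : 0 < P) (n m m' : ℕ)
    (hm : m = m' + (n + 1)) (hm' : 0 < m') :
    a * ((P * a) ^ (-(1 / (m : ℝ)))) ^ (n + 1) =
      (a * (P ^ (-(1 / (m' : ℝ)))) ^ (n + 1)) ^ ((m' : ℝ) / m) := by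
  have hm0 : (0:ℝ) < m := by exact_mod_cast (by omega : 0 < m)
  have hm'0 : (0:ℝ) < m' := by exact_mod_cast hm'
  have hmc : (m : ℝ) = m' + (n + 1) := by exact_mod_cast hm
  rw [← Real.rpow_natCast ((P * a) ^ (-(1 / (m : ℝ)))) (n + 1),
      ← Real.rpow_natCast (P ^ (-(1 / (m' : ℝ)))) (n + 1),
      ← Real.rpow_mul (mul_pos hP ha).le, ← Real.rpow_mul hP.le,
      Real.mul_rpow hP.le ha.le,
      Real.mul_rpow ha.le (Real.rpow_nonneg hP.le _),
      ← Real.rpow_mul hP.le]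
  have h1 : a * (P ^ (-(1 / (m : ℝ)) * ((n:ℝ) + 1)) * a ^ (-(1 / (m : ℝ)) * ((n:ℝ) + 1)))
      = a ^ (1 + -(1 / (m : ℝ)) * ((n:ℝ) + 1)) * P ^ (-(1 / (m : ℝ)) * ((n:ℝ) + 1)) := by
    rw [Real.rpow_add ha, Real.rpow_one]; ring
  have eA : 1 + -(1 / (m : ℝ)) * ((n:ℝ) + 1) = (m' : ℝ) / m := by
    field_simp
    linarith [hmc]
  have eB : -(1 / (m : ℝ)) * ((n:ℝ) + 1) = -(1 / (m' : ℝ)) * ((n:ℝ) + 1) * ((m' : ℝ) / m) := by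
    field_simp
  push_cast
  rw [h1, eA, eB]

/-- Lemma 3.2: for `k ≥ 2`, `μ_k·α^d·β_k^{d+1} → 0` iff `μ_k·α^d·β_{k-1}^{d+1} → 0`. -/
theorem stmt0 (d k : ℕ) (hd : 1 ≤ d) (hk : 2 ≤ k)
    (α : ℕ → ℝ) (μ : ℕ → ℕ → ℝ)
    (hα : ∀ N, 0 < α N) (hμ : ∀ i, 1 ≤ i → i ≤ k → ∀ N, 0 < μ i N) :
    Tendsto (fun N => μ k N * α N ^ d * beta d α μ k N ^ (d + 1)) atTop (nhds 0) ↔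
      Tendsto (fun N => μ k N * α N ^ d * beta d α μ (k - 1) N ^ (d + 1)) atTop (nhds 0) := by
  obtain ⟨k', rfl⟩ : ∃ k', k = k' + 2 := ⟨k - 2, by omega⟩
  set m' : ℕ := k' * d + (k' + 1) with hm'def
  set m : ℕ := (k' + 1) * d + (k' + 2) with hmdef
  have hmm : m = m' + (d + 1) := by rw [hmdef, hm'def]; ring
  have hm'pos : 0 < m' := by omega
  have hmpos : 0 < m := by omega
  set θ : ℝ := (m' : ℝ) / m with hθdef
  have hθ : 0 < θ := by
    apply div_pos <;> exact_mod_cast (by omega : (0:ℕ) < _)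
  set f : ℕ → ℝ := fun N => μ (k' + 2) N * α N ^ d * beta d α μ (k' + 2) N ^ (d + 1) with hf
  set g : ℕ → ℝ := fun N => μ (k' + 2) N * α N ^ d * beta d α μ (k' + 2 - 1) N ^ (d + 1) with hg
  have hkey : ∀ N : ℕ, 1 ≤ N → f N = g N ^ θ ∧ 0 < g N := by
    intro N hN
    set a : ℝ := μ (k' + 2) N * α N ^ d with hadef
    have ha : 0 < a := mul_pos (hμ _ (by omega) (by omega) N) (pow_pos (hα N) d)
    set P : ℝ := (N : ℝ) * α N ^ (k' * d) * ∏ i ∈ Finset.Icc 1 (k' + 1), μ i N with hPdef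
    have hP : 0 < P := by
      apply mul_pos (mul_pos (by exact_mod_cast hN) (pow_pos (hα N) _))
      exact Finset.prod_pos fun i hi => by
        simp only [Finset.mem_Icc] at hi
        exact hμ i hi.1 (by omega) N
    have e1 : k' + 2 - 1 = k' + 1 := by omega
    have e2 : k' + 1 - 1 = k' := by omega
    have hb1 : beta d α μ (k' + 2 - 1) N = P ^ (-(1 / (m' : ℝ))) := by
      simp only [beta, e1, e2]
      rfl
    have hQ : (N : ℝ) * α N ^ ((k' + 1) * d) * ∏ i ∈ Finset.Icc 1 (k' + 2), μ i N
        = P * a := by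
      rw [Finset.prod_Icc_succ_top (by omega), add_mul, one_mul, pow_add, hPdef, hadef]
      ring
    have hb2 : beta d α μ (k' + 2) N = (P * a) ^ (-(1 / (m : ℝ))) := by
      simp only [beta, e1]
      rw [hQ]
    constructor
    · show a * beta d α μ (k' + 2) N ^ (d + 1) = (a * beta d α μ (k' + 2 - 1) N ^ (d + 1)) ^ θ
      rw [hb1, hb2, hθdef]
      exact key_eq a P ha hP d m m' hmm hm'pos
    · show 0 < a * beta d α μ (k' + 2 - 1) N ^ (d + 1)
      rw [hb1]
      positivity
  constructor
  · intro h
    apply rpow_tendsto_aux (θ := θ⁻¹) (by positivity) _ h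
    filter_upwards [eventually_ge_atTop 1] with N hN
    obtain ⟨heq, hgp⟩ := hkey N hN
    rw [heq, Real.rpow_rpow_inv hgp.le hθ.ne']
  · intro h
    apply rpow_tendsto_aux hθ _ h
    filter_upwards [eventually_ge_atTop 1] with N hN
    exact (hkey N hN).1
end

section
/- Suppose that for every positive integer N, (Y_N(t), t ≥ 0) is a nonnegative stochastic process on a probability space (Ω_N, P_N) such that t ↦ Y_N(ω, t) is nondecreasing for every ω, ω ↦ Y_N(ω, t) is measurable, and E[Y_N(t)] < ∞ for each t > 0. Assume there exist sequences of positive real numbers (ν_N) and (s_N) and a continuous nondecreasing function g : (0,∞) → (0,∞) such that for each fixed t > 0 and ε > 0: (i) P_N(|Y_N(s_N t) − E[Y_N(s_N t)]| > ε·E[Y_N(s_N t)]) → 0 as N → ∞, and (ii) E[Y_N(s_N t)]/ν_N → g(t) as N → ∞. Then for all ε > 0 and δ ∈ (0,1), P_N( ν_N·g(t)·(1−ε) ≤ Y_N(s_N t) ≤ ν_N·g(t)·(1+ε) for all t ∈ [δ, δ^{-1}] ) → 1 as N → ∞. (Lemma 3.3 of the paper, quoted from Lemma 9 of Foo–Leder–Schweinsberg.)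 -/
open Filter MeasureTheory
open scoped ENNReal

set_option maxHeartbeats 1000000 in
/-- Lemma 3.3 (Lemma 9 of Foo–Leder–Schweinsberg): a nondecreasing nonnegative stochastic
process whose expectation scales like `ν_N g(t)` on the time scale `s_N`, and which
concentrates around its expectation, is uniformly well-approximated by `ν_N g(t)` on
compact time intervals `[δ, δ⁻¹]`, with probability tending to one. -/
theorem stmt2 (Ω : ℕ → Type*) [∀ N, MeasurableSpace (Ω N)]
    (P : ∀ N, Measure (Ω N)) [∀ N, IsProbabilityMeasure (P N)]
    (Y : ∀ N, Ω N → ℝ → ℝ)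
    (hY_nonneg : ∀ N ω t, 0 ≤ t → 0 ≤ Y N ω t)
    (hY_mono : ∀ N ω, MonotoneOn (Y N ω) (Set.Ici (0 : ℝ)))
    (hY_meas : ∀ N t, Measurable (fun ω => Y N ω t))
    (hY_int : ∀ N t, 0 < t → Integrable (fun ω => Y N ω t) (P N))
    (ν s : ℕ → ℝ) (hν : ∀ N, 0 < ν N) (hs : ∀ N, 0 < s N)
    (g : ℝ → ℝ) (hg_cont : ContinuousOn g (Set.Ioi (0 : ℝ)))
    (hg_mono : MonotoneOn g (Set.Ioi (0 : ℝ))) (hg_pos : ∀ t, 0 < t → 0 < g t)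
    (hconc : ∀ t : ℝ, 0 < t → ∀ ε : ℝ, 0 < ε →
      Tendsto (fun N => (P N) {ω | |Y N ω (s N * t) - ∫ ω', Y N ω' (s N * t) ∂(P N)| >
        ε * ∫ ω', Y N ω' (s N * t) ∂(P N)}) atTop (nhds 0))
    (hmean : ∀ t : ℝ, 0 < t →
      Tendsto (fun N => (∫ ω', Y N ω' (s N * t) ∂(P N)) / ν N) atTop (nhds (g t))) :
    ∀ ε : ℝ, 0 < ε → ∀ δ : ℝ, 0 < δ → δ < 1 →
      Tendsto (fun N => (P N) {ω | ∀ t ∈ Set.Icc δ δ⁻¹,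
          ν N * g t * (1 - ε) ≤ Y N ω (s N * t) ∧ Y N ω (s N * t) ≤ ν N * g t * (1 + ε)})
        atTop (nhds 1) := by
  intro ε hε δ hδ hδ1
  set θ : ℝ := min (ε / 4) (1 / 2) with hθdef
  have hθpos : 0 < θ := lt_min (by linarith) one_half_pos
  have hθε : θ ≤ ε / 4 := min_le_left _ _
  have hθhalf : θ ≤ 1 / 2 := min_le_right _ _
  have hδinvpos : 0 < δ⁻¹ := inv_pos.mpr hδ
  have hδmul : δ * δ⁻¹ = 1 := mul_inv_cancel₀ hδ.ne'
  have hδδ : δ < δ⁻¹ := by nlinarith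
  have hgδ : 0 < g δ := hg_pos δ hδ
  -- uniform continuity of g on the compact interval
  have hsub : Set.Icc δ δ⁻¹ ⊆ Set.Ioi (0 : ℝ) := fun x hx => lt_of_lt_of_le hδ hx.1
  have hUC : UniformContinuousOn g (Set.Icc δ δ⁻¹) :=
    isCompact_Icc.uniformContinuousOn_of_continuous (hg_cont.mono hsub)
  obtain ⟨ρ, hρpos, hρ⟩ := Metric.uniformContinuousOn_iff.mp hUC (θ * g δ) (by positivity)
  -- the grid
  set L : ℝ := δ⁻¹ - δ with hLdef
  have hL : 0 < L := sub_pos.mpr hδδ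
  set n : ℕ := ⌈L / ρ⌉₊ + 1 with hndef
  have hn1 : 1 ≤ n := by omega
  have hn0' : (0 : ℝ) < (n : ℝ) := by positivity
  set w : ℝ := L / n with hwdef
  have hw : 0 < w := div_pos hL hn0'
  have hwρ : w < ρ := by
    have hceil : L / ρ ≤ (⌈L / ρ⌉₊ : ℝ) := Nat.le_ceil _
    have hnn : L / ρ < (n : ℝ) := by rw [hndef]; push_cast; linarith
    rw [hwdef, div_lt_iff₀ hn0']
    have h2 := (div_lt_iff₀ hρpos).mp hnn
    linarith
  set τ : ℕ → ℝ := fun i => δ + (i : ℝ) * w with hτdef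
  have hτpos : ∀ i : ℕ, 0 < τ i := by
    intro i
    have : (0 : ℝ) ≤ (i : ℝ) * w := mul_nonneg (Nat.cast_nonneg i) hw.le
    simp only [hτdef]; linarith
  have hτn : τ n = δ⁻¹ := by
    have hne : (n : ℝ) ≠ 0 := hn0'.ne'
    have hδne : δ ≠ 0 := hδ.ne'
    simp only [hτdef, hwdef, hLdef]
    field_simp
    ring
  have hτmem : ∀ i : ℕ, i ≤ n → τ i ∈ Set.Icc δ δ⁻¹ := by
    intro i hi
    have h1 : (i : ℝ) * w ≤ (n : ℝ) * w :=
      mul_le_mul_of_nonneg_right (Nat.cast_le.mpr hi) hw.le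
    have h0 : (0 : ℝ) ≤ (i : ℝ) * w := mul_nonneg (Nat.cast_nonneg i) hw.le
    have h2 : τ i ≤ τ n := by simp only [hτdef]; linarith
    constructor
    · simp only [hτdef]; linarith
    · rw [hτn] at h2; exact h2
  -- eventual closeness of normalized means at the grid points
  have hmean_ev : ∀ᶠ N in atTop, ∀ i ∈ Finset.range (n + 1),
      |(∫ ω', Y N ω' (s N * τ i) ∂(P N)) / ν N - g (τ i)| < θ * g δ := by
    rw [Filter.eventually_all_finset]
    intro i _
    have h1 := hmean (τ i) (hτpos i)
    have h2 := Metric.tendsto_nhds.mp h1 (θ * g δ) (by positivity)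
    filter_upwards [h2] with N hN
    rwa [Real.dist_eq] at hN
  -- sum of bad probabilities tends to 0
  have hSsum : Tendsto (fun N => ∑ i ∈ Finset.range (n + 1),
      (P N) {ω | |Y N ω (s N * τ i) - ∫ ω', Y N ω' (s N * τ i) ∂(P N)| >
        θ * ∫ ω', Y N ω' (s N * τ i) ∂(P N)}) atTop (nhds 0) := by
    have h := tendsto_finset_sum (Finset.range (n + 1))
      (fun i _ => hconc (τ i) (hτpos i) θ hθpos)
    simpa using h
  -- key eventual inequality
  have key : ∀ᶠ N in atTop,
      (1 : ℝ≥0∞) ≤ (P N) {ω | ∀ t ∈ Set.Icc δ δ⁻¹,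
          ν N * g t * (1 - ε) ≤ Y N ω (s N * t) ∧ Y N ω (s N * t) ≤ ν N * g t * (1 + ε)} +
        ∑ i ∈ Finset.range (n + 1),
          (P N) {ω | |Y N ω (s N * τ i) - ∫ ω', Y N ω' (s N * τ i) ∂(P N)| >
            θ * ∫ ω', Y N ω' (s N * τ i) ∂(P N)} := by
    filter_upwards [hmean_ev] with N hN
    have hincl : (Set.univ : Set (Ω N)) ⊆
        {ω | ∀ t ∈ Set.Icc δ δ⁻¹,
          ν N * g t * (1 - ε) ≤ Y N ω (s N * t) ∧ Y N ω (s N * t) ≤ ν N * g t * (1 + ε)} ∪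
        ⋃ i ∈ Finset.range (n + 1),
          {ω | |Y N ω (s N * τ i) - ∫ ω', Y N ω' (s N * τ i) ∂(P N)| >
            θ * ∫ ω', Y N ω' (s N * τ i) ∂(P N)} := by
      intro ω _
      by_cases hcase : ∀ i ∈ Finset.range (n + 1),
          |Y N ω (s N * τ i) - ∫ ω', Y N ω' (s N * τ i) ∂(P N)| ≤
            θ * ∫ ω', Y N ω' (s N * τ i) ∂(P N)
      · left
        intro t ht
        have ht0 : 0 < t := lt_of_lt_of_le hδ ht.1
        set x : ℝ := (t - δ) / w with hxdef
        have hx0 : 0 ≤ x := div_nonneg (by linarith [ht.1]) hw.le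
        set j : ℕ := min ⌊x⌋₊ (n - 1) with hjdef
        have hminr : j ≤ n - 1 := min_le_right _ _
        have hjn : j + 1 ≤ n := by omega
        have hxw : x * w = t - δ := div_mul_cancel₀ _ hw.ne'
        have hτj_le : τ j ≤ t := by
          have h1 : (j : ℝ) ≤ x :=
            le_trans (Nat.cast_le.mpr (min_le_left _ _)) (Nat.floor_le hx0)
          have h2 : (j : ℝ) * w ≤ x * w := mul_le_mul_of_nonneg_right h1 hw.le
          simp only [hτdef]
          linarith
        have hτj1_ge : t ≤ τ (j + 1) := by
          by_cases hc : ⌊x⌋₊ ≤ n - 1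
          · have hj : j = ⌊x⌋₊ := min_eq_left hc
            have h2 : x < (⌊x⌋₊ : ℝ) + 1 := Nat.lt_floor_add_one x
            have h3 : x * w ≤ ((j : ℝ) + 1) * w := by
              apply mul_le_mul_of_nonneg_right _ hw.le
              rw [hj]; exact h2.le
            simp only [hτdef]
            push_cast
            linarith
          · have hj : j = n - 1 := min_eq_right (by omega)
            have hj1 : j + 1 = n := by omega
            rw [hj1, hτn]; exact ht.2
        have hstep : τ (j + 1) - τ j = w := by
          simp only [hτdef]; push_cast; ring
        have hτjIcc : τ j ∈ Set.Icc δ δ⁻¹ := hτmem j (by omega)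
        have hτj1Icc : τ (j + 1) ∈ Set.Icc δ δ⁻¹ := hτmem (j + 1) hjn
        -- distance of grid points to t, and g-bounds
        have hd1 : |g t - g (τ j)| < θ * g δ := by
          have hdist : dist t (τ j) < ρ := by
            rw [Real.dist_eq, abs_of_nonneg (by linarith)]
            linarith
          have := hρ t ht (τ j) hτjIcc hdist
          rwa [Real.dist_eq] at this
        have hd2 : |g t - g (τ (j + 1))| < θ * g δ := by
          have hdist : dist t (τ (j + 1)) < ρ := by
            rw [Real.dist_eq, abs_of_nonpos (by linarith)]
            linarith
          have := hρ t ht (τ (j + 1)) hτj1Icc hdist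
          rwa [Real.dist_eq] at this
        -- good events and mean bounds at grid points j, j+1
        have hGj := hcase j (Finset.mem_range.mpr (by omega))
        have hGj1 := hcase (j + 1) (Finset.mem_range.mpr (by omega))
        have hMj := hN j (Finset.mem_range.mpr (by omega))
        have hMj1 := hN (j + 1) (Finset.mem_range.mpr (by omega))
        set mj : ℝ := ∫ ω', Y N ω' (s N * τ j) ∂(P N) with hmjdef
        set mj1 : ℝ := ∫ ω', Y N ω' (s N * τ (j + 1)) ∂(P N) with hmj1def
        have hν' : 0 < ν N := hν N
        have hmono1 : Y N ω (s N * τ j) ≤ Y N ω (s N * t) :=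
          hY_mono N ω (Set.mem_Ici.mpr (mul_nonneg (hs N).le (hτpos j).le))
            (Set.mem_Ici.mpr (mul_nonneg (hs N).le ht0.le))
            (mul_le_mul_of_nonneg_left hτj_le (hs N).le)
        have hmono2 : Y N ω (s N * t) ≤ Y N ω (s N * τ (j + 1)) :=
          hY_mono N ω (Set.mem_Ici.mpr (mul_nonneg (hs N).le ht0.le))
            (Set.mem_Ici.mpr (mul_nonneg (hs N).le (hτpos (j + 1)).le))
            (mul_le_mul_of_nonneg_left hτj1_ge (hs N).le)
        have e1 := abs_le.mp hGj
        have e2 := abs_le.mp hGj1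
        have f1 := abs_lt.mp hMj
        have f2 := abs_lt.mp hMj1
        have d1 := abs_lt.mp hd1
        have d2 := abs_lt.mp hd2
        have hgt : g δ ≤ g t :=
          hg_mono (Set.mem_Ioi.mpr hδ) (Set.mem_Ioi.mpr ht0) ht.1
        have hgtpos : 0 < g t := hg_pos t ht0
        have mlb : ν N * (g t - 2 * (θ * g δ)) ≤ mj := by
          have hq : g t - 2 * (θ * g δ) ≤ mj / ν N := by linarith only [f1.1, d1.2]
          have h3 := (le_div_iff₀ hν').mp hq
          linarith only [h3, mul_comm (ν N) (g t - 2 * (θ * g δ))]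
        have mub : mj1 ≤ ν N * (g t + 2 * (θ * g δ)) := by
          have hq : mj1 / ν N ≤ g t + 2 * (θ * g δ) := by linarith only [f2.2, d2.1]
          have h3 := (div_le_iff₀ hν').mp hq
          linarith only [h3, mul_comm (ν N) (g t + 2 * (θ * g δ))]
        have key1 : (1 - ε) * g t ≤ (1 - θ) * (g t - 2 * (θ * g δ)) := by
          linarith only [mul_nonneg hθpos.le (sub_nonneg.mpr hgt),
            mul_nonneg (mul_self_nonneg θ) hgδ.le,
            mul_nonneg (by linarith only [hθε, hε] : (0 : ℝ) ≤ ε - 3 * θ) hgtpos.le]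
        have key2 : (1 + θ) * (g t + 2 * (θ * g δ)) ≤ (1 + ε) * g t := by
          linarith only [mul_nonneg hθpos.le (sub_nonneg.mpr hgt),
            mul_nonneg (mul_self_nonneg θ) (sub_nonneg.mpr hgt),
            mul_nonneg (by linarith only [hθε] : (0 : ℝ) ≤ ε - 4 * θ) hgtpos.le,
            mul_nonneg (mul_nonneg hθpos.le (by linarith only [hθhalf] : (0 : ℝ) ≤ 1 - 2 * θ)) hgtpos.le]
        constructor
        · have s1 : ν N * ((1 - ε) * g t) ≤ ν N * ((1 - θ) * (g t - 2 * (θ * g δ))) :=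
            mul_le_mul_of_nonneg_left key1 hν'.le
          have s2 : (1 - θ) * (ν N * (g t - 2 * (θ * g δ))) ≤ (1 - θ) * mj :=
            mul_le_mul_of_nonneg_left mlb (by linarith only [hθhalf])
          linarith only [e1.1, hmono1, s1, s2]
        · have s1 : (1 + θ) * mj1 ≤ (1 + θ) * (ν N * (g t + 2 * (θ * g δ))) :=
            mul_le_mul_of_nonneg_left mub (by linarith only [hθpos])
          have s2 : ν N * ((1 + θ) * (g t + 2 * (θ * g δ))) ≤ ν N * ((1 + ε) * g t) :=
            mul_le_mul_of_nonneg_left key2 hν'.le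
          linarith only [e2.2, hmono2, s1, s2]
      · right
        push_neg at hcase
        obtain ⟨i, hi, hlt⟩ := hcase
        exact Set.mem_iUnion₂.mpr ⟨i, hi, hlt⟩
    calc (1 : ℝ≥0∞) = P N Set.univ := (measure_univ).symm
      _ ≤ P N ({ω | ∀ t ∈ Set.Icc δ δ⁻¹,
            ν N * g t * (1 - ε) ≤ Y N ω (s N * t) ∧ Y N ω (s N * t) ≤ ν N * g t * (1 + ε)} ∪
          ⋃ i ∈ Finset.range (n + 1),
            {ω | |Y N ω (s N * τ i) - ∫ ω', Y N ω' (s N * τ i) ∂(P N)| >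
              θ * ∫ ω', Y N ω' (s N * τ i) ∂(P N)}) := measure_mono hincl
      _ ≤ P N {ω | ∀ t ∈ Set.Icc δ δ⁻¹,
            ν N * g t * (1 - ε) ≤ Y N ω (s N * t) ∧ Y N ω (s N * t) ≤ ν N * g t * (1 + ε)} +
          P N (⋃ i ∈ Finset.range (n + 1),
            {ω | |Y N ω (s N * τ i) - ∫ ω', Y N ω' (s N * τ i) ∂(P N)| >
              θ * ∫ ω', Y N ω' (s N * τ i) ∂(P N)}) := measure_union_le _ _
      _ ≤ _ := add_le_add_right (measure_biUnion_finset_le _ _) _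
  -- squeeze
  have hlower : ∀ᶠ N in atTop,
      (1 : ℝ≥0∞) - ∑ i ∈ Finset.range (n + 1),
          (P N) {ω | |Y N ω (s N * τ i) - ∫ ω', Y N ω' (s N * τ i) ∂(P N)| >
            θ * ∫ ω', Y N ω' (s N * τ i) ∂(P N)} ≤
        (P N) {ω | ∀ t ∈ Set.Icc δ δ⁻¹,
          ν N * g t * (1 - ε) ≤ Y N ω (s N * t) ∧ Y N ω (s N * t) ≤ ν N * g t * (1 + ε)} :=
    key.mono fun N hN => tsub_le_iff_right.mpr hN
  have hupper : ∀ᶠ N in atTop,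
      (P N) {ω | ∀ t ∈ Set.Icc δ δ⁻¹,
          ν N * g t * (1 - ε) ≤ Y N ω (s N * t) ∧ Y N ω (s N * t) ≤ ν N * g t * (1 + ε)} ≤ 1 :=
    Eventually.of_forall fun N => prob_le_one
  have hlow : Tendsto (fun N => (1 : ℝ≥0∞) - ∑ i ∈ Finset.range (n + 1),
      (P N) {ω | |Y N ω (s N * τ i) - ∫ ω', Y N ω' (s N * τ i) ∂(P N)| >
        θ * ∫ ω', Y N ω' (s N * τ i) ∂(P N)}) atTop (nhds 1) := by
    have h := ENNReal.Tendsto.sub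
      (tendsto_const_nhds : Tendsto (fun _ : ℕ => (1 : ℝ≥0∞)) atTop (nhds 1))
      hSsum (Or.inl ENNReal.one_ne_top)
    simpa using h
  exact tendsto_of_tendsto_of_tendsto_of_le_of_le' hlow tendsto_const_nhds hlower hupper
end
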